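/- Let S be a finite set of solutions, G a set of m groups, true utilities u and noisy utilities u_δ with |u_δ(s,g) − u(s,g)| ≤ δ for all s, g, and ε ≥ 2δ. Define the noisy recursive sets T_i: T_0 = S, T_i = { s ∈ T_{i-1} : u_δ(s,[i]) ≥ max_{s'∈T_{i-1}} u_δ(s',[i]) − ε }. Define pointwise-slack sets B_i with respect to the true utilities u using slack β_i(s) = ε + 2δ if s ∈ T_i and ε − 2δ otherwise: B_0 = S, B_i = { s ∈ B_{i-1} : u(s,[i]) ≥ max_{s'∈B_{i-1}} u(s',[i]) − β_i(s) }. Then T_i = B_i for all i = 0,...,m. In particular, any solution that is ε-significant with respect to the noisy utilities is (ε−2δ, ε+2δ)-significant with respect to the true utilities. -/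

import Mathlib

open scoped Classical

/-- The vector of the values of `w` sorted in nondecreasing order;
`sortedVec m w i` is the `i`-th smallest value of `w`. -/
noncomputable def sortedVec (m : ℕ) (w : Fin m → ℝ) : Fin m → ℝ :=
  fun i => ((Finset.univ.val.map w).sort (· ≤ ·)).get ⟨i.1, by simp⟩

/-- Lexicographic order on `ℝ^m`: `lexLE m v u` means `v ⪯ u`, i.e. either `v = u`
or at the first coordinate where they differ, `u` is strictly larger. -/
def lexLE (m : ℕ) (v u : Fin m → ℝ) : Prop :=
  v = u ∨ ∃ i : Fin m, (∀ j < i, v j = u j) ∧ v i < u i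

/-- The recursively defined sets `S_i^α`: `S_0^α = S` and `S_i^α` keeps those solutions of
`S_{i-1}^α` whose `i`-th smallest group utility is within `α_i` of the maximum `i`-th smallest
group utility over `S_{i-1}^α` (expressed as: at least every other value minus `α_i`). -/
noncomputable def recSets {σ : Type*} (m : ℕ) (S : Finset σ)
    (u : σ → Fin m → ℝ) (α : Fin m → ℝ) : ℕ → Finset σ
  | 0 => S
  | (i+1) =>
    if h : i < m then
      (recSets m S u α i).filter (fun s => ∀ t ∈ recSets m S u α i,
        sortedVec m (u s) ⟨i, h⟩ ≥ sortedVec m (u t) ⟨i, h⟩ - α ⟨i, h⟩)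
    else recSets m S u α i


/-- Recursively defined sets with a solution-dependent slack function `β i s`. -/
noncomputable def recSetsF {σ : Type*} (m : ℕ) (S : Finset σ)
    (u : σ → Fin m → ℝ) (β : Fin m → σ → ℝ) : ℕ → Finset σ
  | 0 => S
  | (i+1) =>
    if h : i < m then
      (recSetsF m S u β i).filter (fun s => ∀ t ∈ recSetsF m S u β i,
        sortedVec m (u s) ⟨i, h⟩ ≥ sortedVec m (u t) ⟨i, h⟩ - β ⟨i, h⟩ s)
    else recSetsF m S u β i



lemma countP_le_of_sorted_lt {l : List ℝ} (hs : l.Pairwise (· ≤ ·)) {i : ℕ} (hi : i < l.length)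
    {x : ℝ} (hx : x < l.get ⟨i, hi⟩) : l.countP (fun a => decide (a ≤ x)) ≤ i := by
  have hzero : (l.drop i).countP (fun a => decide (a ≤ x)) = 0 := by
    rw [List.countP_eq_zero]
    intro a ha
    obtain ⟨j, hj, rfl⟩ := List.mem_iff_getElem.1 ha
    have hij : i + j < l.length := by simp [List.length_drop] at hj; omega
    rw [List.getElem_drop]
    have : l.get ⟨i, hi⟩ ≤ l[i + j] := by
      apply hs.rel_get_of_le (a := ⟨i, hi⟩) (b := ⟨i + j, by
        have := hj; simp [List.length_drop] at this; omega⟩)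
      exact Nat.le_add_right i j
    simp only [decide_eq_true_eq]
    push_neg
    exact lt_of_lt_of_le hx this
  calc l.countP (fun a => decide (a ≤ x))
      = (l.take i ++ l.drop i).countP (fun a => decide (a ≤ x)) := by rw [List.take_append_drop]
    _ = (l.take i).countP _ + (l.drop i).countP _ := List.countP_append
    _ ≤ (l.take i).length + 0 := by rw [hzero]; exact Nat.add_le_add_right List.countP_le_length 0
    _ ≤ i := by simp [List.length_take]

lemma le_countP_of_sorted {l : List ℝ} (hs : l.Pairwise (· ≤ ·)) {i : ℕ} (hi : i < l.length) :
    i + 1 ≤ l.countP (fun a => decide (a ≤ l.get ⟨i, hi⟩)) := by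
  have hall : ∀ a ∈ l.take (i+1), a ≤ l.get ⟨i, hi⟩ := by
    intro a ha
    obtain ⟨j, hj, rfl⟩ := List.mem_iff_getElem.1 ha
    have hj' : j < l.length ∧ j ≤ i := by simp [List.length_take] at hj; omega
    rw [List.getElem_take]
    exact hs.rel_get_of_le (a := ⟨j, hj'.1⟩) (b := ⟨i, hi⟩) hj'.2
  have heq : (l.take (i+1)).countP (fun a => decide (a ≤ l.get ⟨i, hi⟩)) = (l.take (i+1)).length := by
    rw [List.countP_eq_length]
    intro a ha; simpa using hall a ha
  calc i + 1 = (l.take (i+1)).length := by simp [List.length_take]; omega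
    _ = (l.take (i+1)).countP _ := heq.symm
    _ ≤ (l.take (i+1) ++ l.drop (i+1)).countP _ := by
        rw [List.countP_append]; exact Nat.le_add_right _ _
    _ = l.countP _ := by rw [List.take_append_drop]

lemma sortedVec_le_add {m : ℕ} {v w : Fin m → ℝ} {c : ℝ}
    (h : ∀ g, v g ≤ w g + c) (i : Fin m) :
    sortedVec m v i ≤ sortedVec m w i + c := by
  classical
  set Lv := ((Finset.univ.val.map v).sort (· ≤ ·)) with hLv
  set Lw := ((Finset.univ.val.map w).sort (· ≤ ·)) with hLw
  have hlenv : Lv.length = m := by simp [hLv]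
  have hlenw : Lw.length = m := by simp [hLw]
  have hiv : i.1 < Lv.length := by rw [hlenv]; exact i.2
  have hiw : i.1 < Lw.length := by rw [hlenw]; exact i.2
  show Lv.get ⟨i.1, _⟩ ≤ Lw.get ⟨i.1, _⟩ + c
  set x := Lw.get ⟨i.1, hiw⟩ with hx
  -- count on w side
  have h1 : i.1 + 1 ≤ Lw.countP (fun a => decide (a ≤ x)) :=
    le_countP_of_sorted (Multiset.pairwise_sort _ _) hiw
  have h1' : i.1 + 1 ≤ Multiset.countP (fun a => a ≤ x) (Finset.univ.val.map w) := by
    rwa [← Multiset.sort_eq (Finset.univ.val.map w) (· ≤ ·), Multiset.coe_countP,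
      List.countP_eq_length_filter, ← List.countP_eq_length_filter]
  have h2 : Multiset.countP (fun a => a ≤ x) (Finset.univ.val.map w)
      ≤ Multiset.countP (fun a => a ≤ x + c) (Finset.univ.val.map v) := by
    rw [Multiset.countP_map, Multiset.countP_map]
    apply Multiset.card_le_card
    apply Multiset.monotone_filter_right
    intro g hg
    exact le_trans (h g) (by linarith)
  have h3 : i.1 + 1 ≤ Lv.countP (fun a => decide (a ≤ x + c)) := by
    have := le_trans h1' h2
    rwa [← Multiset.sort_eq (Finset.univ.val.map v) (· ≤ ·), Multiset.coe_countP,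
      List.countP_eq_length_filter, ← List.countP_eq_length_filter] at this
  by_contra hcon
  push_neg at hcon
  have h4 := countP_le_of_sorted_lt (Multiset.pairwise_sort (Finset.univ.val.map v) (· ≤ ·)) hiv hcon
  rw [← hLv] at h4
  omega

/-- Lemma 16: let `T_i` be the ε-significance recursion computed with the noisy utilities
`uδ`, and let `B_i` be the recursion with respect to the true utilities `u` using the
pointwise slack `β i s = ε + 2δ` if `s ∈ T_i` and `ε − 2δ` otherwise. Then `T_i = B_i` for
all `i ≤ m`; in particular every solution that is ε-significant with respect to the noisy
utilities is (ε − 2δ, ε + 2δ)-significant with respect to the true utilities. -/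
theorem noisy_significance {σ : Type*} (S : Finset σ) (m : ℕ)
    (u uδ : σ → Fin m → ℝ) (δ ε : ℝ) (hδ : 0 ≤ δ) (hε : 2 * δ ≤ ε)
    (hnoise : ∀ s ∈ S, ∀ g : Fin m, |uδ s g - u s g| ≤ δ) :
    (∀ i : ℕ, i ≤ m →
      recSets m S uδ (fun _ => ε) i =
        recSetsF m S u
          (fun i s => if s ∈ recSets m S uδ (fun _ => ε) (i.1 + 1) then ε + 2 * δ
            else ε - 2 * δ) i) ∧
    (∀ s ∈ recSets m S uδ (fun _ => ε) m,
      ∃ β : Fin m → σ → ℝ, (∀ i t, β i t ∈ Set.Icc (ε - 2 * δ) (ε + 2 * δ)) ∧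
        s ∈ recSetsF m S u β m) := by
  classical
  have hsub : ∀ i, recSets m S uδ (fun _ => ε) i ⊆ S := by
    intro i
    induction i with
    | zero => exact Finset.Subset.refl S
    | succ i ih =>
      rw [recSets]
      split
      · exact (Finset.filter_subset _ _).trans ih
      · exact ih
  have hd1 : ∀ s ∈ S, ∀ j : Fin m, sortedVec m (uδ s) j ≤ sortedVec m (u s) j + δ := by
    intro s hs j
    exact sortedVec_le_add (fun g => by
      have := hnoise s hs g; rw [abs_sub_le_iff] at this; linarith [this.1]) j
  have hd2 : ∀ s ∈ S, ∀ j : Fin m, sortedVec m (u s) j ≤ sortedVec m (uδ s) j + δ := by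
    intro s hs j
    exact sortedVec_le_add (fun g => by
      have := hnoise s hs g; rw [abs_sub_le_iff] at this; linarith [this.2]) j
  have key : ∀ i : ℕ, i ≤ m →
      recSets m S uδ (fun _ => ε) i =
        recSetsF m S u
          (fun i s => if s ∈ recSets m S uδ (fun _ => ε) (i.1 + 1) then ε + 2 * δ
            else ε - 2 * δ) i := by
    intro i
    induction i with
    | zero => intro _; rfl
    | succ i ih =>
      intro him
      have hi : i < m := him
      have hIH := ih hi.le
      rw [recSets, recSetsF, dif_pos hi, dif_pos hi, ← hIH]
      ext s
      simp only [Finset.mem_filter, Fin.val_mk]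
      constructor
      · rintro ⟨hsT, hP⟩
        refine ⟨hsT, fun t ht => ?_⟩
        have hsT1 : s ∈ recSets m S uδ (fun _ => ε) (i + 1) := by
          rw [recSets, dif_pos hi]
          exact Finset.mem_filter.2 ⟨hsT, hP⟩
        rw [if_pos hsT1]
        have e1 := hd1 s (hsub i hsT) ⟨i, hi⟩
        have e2 := hd2 t (hsub i ht) ⟨i, hi⟩
        have e3 := hP t ht
        simp only [ge_iff_le] at e3 ⊢
        linarith
      · rintro ⟨hsT, hQ⟩
        refine ⟨hsT, fun t ht => ?_⟩
        by_cases hmem : s ∈ recSets m S uδ (fun _ => ε) (i + 1)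
        · rw [recSets, dif_pos hi] at hmem
          exact (Finset.mem_filter.1 hmem).2 t ht
        · have hQt := hQ t ht
          rw [if_neg hmem] at hQt
          have e1 := hd2 s (hsub i hsT) ⟨i, hi⟩
          have e2 := hd1 t (hsub i ht) ⟨i, hi⟩
          simp only [ge_iff_le] at hQt ⊢
          linarith
  refine ⟨key, fun s hs => ?_⟩
  refine ⟨fun i s => if s ∈ recSets m S uδ (fun _ => ε) (i.1 + 1) then ε + 2 * δ
      else ε - 2 * δ, fun i t => ?_, ?_⟩
  · dsimp only
    rw [Set.mem_Icc]
    split_ifs <;> constructor <;> linarith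
  · rw [← key m le_rfl]
    exact hs
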